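/- Let A(1),…,A(ℓ) ∈ T^{n×n} each have ρ(A(i)) = 0 and ultimate rank n (critical graph a disjoint union of simple circuits covering all nodes, hence each A(i) non-singular with per(A(i)) = 0). If the product P = A(1)⊙⋯⊙A(ℓ) contains a circuit of strictly positive weight in G(P) (i.e., ρ(P) > 0), then urk(P) < n. -/

import Mathlib

/-- The max-plus (tropical) semiring `T = ℝ ∪ {-∞}`. -/
abbrev T : Type := WithBot ℝ

/-- Tropical matrix product. -/
noncomputable def tmul {n m k : ℕ} (A : Fin n → Fin m → T) (B : Fin m → Fin k → T) :
    Fin n → Fin k → T :=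
  fun i j => Finset.univ.sup fun l => A i l + B l j

/-- Tropical matrix-vector product. -/
noncomputable def tmulVec {n m : ℕ} (A : Fin n → Fin m → T) (u : Fin m → T) : Fin n → T :=
  fun i => Finset.univ.sup fun j => A i j + u j

/-- Tropical identity matrix. -/
noncomputable def tId (n : ℕ) : Fin n → Fin n → T :=
  fun i j => if i = j then (0 : T) else ⊥

/-- Tropical matrix powers. -/
noncomputable def tpow {n : ℕ} (A : Fin n → Fin n → T) : ℕ → (Fin n → Fin n → T)
  | 0 => tId n
  | (m + 1) => tmul (tpow A m) A

/-- Tropical product of a list of matrices (empty product = identity). -/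
noncomputable def tProd {n : ℕ} : List (Fin n → Fin n → T) → (Fin n → Fin n → T)
  | [] => tId n
  | (M :: L) => tmul M (tProd L)

/-- Weight of a permutation. -/
noncomputable def wt {n : ℕ} (A : Fin n → Fin n → T) (σ : Equiv.Perm (Fin n)) : T :=
  ∑ i, A i (σ i)

/-- Tropical permanent. -/
noncomputable def per {n : ℕ} (A : Fin n → Fin n → T) : T :=
  Finset.univ.sup fun σ : Equiv.Perm (Fin n) => wt A σ

/-- Tropical non-singularity: finite permanent attained by a unique permutation. -/
def NonSingular {n : ℕ} (A : Fin n → Fin n → T) : Prop :=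
  per A ≠ ⊥ ∧ ∃! σ : Equiv.Perm (Fin n), wt A σ = per A

/-- Weight of the circuit `c 0 → c 1 → ⋯ → c ℓ → c 0` (length `ℓ+1`). -/
noncomputable def cwt {n ℓ : ℕ} (A : Fin n → Fin n → T) (c : Fin (ℓ + 1) → Fin n) : T :=
  ∑ k : Fin (ℓ + 1), A (c k) (c (k + 1))

/-- `ρ(A) = r`: some circuit has mean weight `r`, and every circuit has mean weight `≤ r`. -/
def RhoEq {n : ℕ} (A : Fin n → Fin n → T) (r : ℝ) : Prop :=
  (∃ ℓ, ∃ c : Fin (ℓ + 1) → Fin n, cwt A c = ((((ℓ : ℝ) + 1) * r : ℝ) : T)) ∧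
  ∀ ℓ, ∀ c : Fin (ℓ + 1) → Fin n, cwt A c ≤ ((((ℓ : ℝ) + 1) * r : ℝ) : T)

/-- `(i,j)` is an arc of the critical graph (lies on a circuit of mean weight `r = ρ(A)`). -/
def CritArc {n : ℕ} (A : Fin n → Fin n → T) (r : ℝ) (i j : Fin n) : Prop :=
  ∃ ℓ, ∃ c : Fin (ℓ + 1) → Fin n, cwt A c = ((((ℓ : ℝ) + 1) * r : ℝ) : T) ∧
    ∃ k : Fin (ℓ + 1), c k = i ∧ c (k + 1) = j

/-- `i` is a node of the critical graph. -/
def CritNode {n : ℕ} (A : Fin n → Fin n → T) (r : ℝ) (i : Fin n) : Prop :=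
  ∃ ℓ, ∃ c : Fin (ℓ + 1) → Fin n, cwt A c = ((((ℓ : ℝ) + 1) * r : ℝ) : T) ∧
    ∃ k : Fin (ℓ + 1), c k = i

/-- Reachability in the critical graph. -/
def CritReach {n : ℕ} (A : Fin n → Fin n → T) (r : ℝ) : Fin n → Fin n → Prop :=
  Relation.ReflTransGen (fun i j => CritArc A r i j)

/-- Same strongly connected component of the critical graph. -/
def SameScc {n : ℕ} (A : Fin n → Fin n → T) (r : ℝ) (i j : Fin n) : Prop :=
  CritReach A r i j ∧ CritReach A r j i

/-- `R` is a set of representatives, one per scc of the critical graph. -/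
def SccReps {n : ℕ} (A : Fin n → Fin n → T) (r : ℝ) (R : Finset (Fin n)) : Prop :=
  (∀ i ∈ R, CritNode A r i) ∧
  (∀ i ∈ R, ∀ j ∈ R, i ≠ j → ¬ SameScc A r i j) ∧
  (∀ j, CritNode A r j → ∃ i ∈ R, SameScc A r i j)

/-- Cyclicity of the scc of the critical graph containing `i`:
the gcd (greatest common divisor) of the lengths of the critical circuits through `i`. -/
noncomputable def cycAt {n : ℕ} (A : Fin n → Fin n → T) (r : ℝ) (i : Fin n) : ℕ :=
  sSup {d : ℕ | ∀ ℓ : ℕ,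
    (∃ c : Fin (ℓ + 1) → Fin n, cwt A c = ((((ℓ : ℝ) + 1) * r : ℝ) : T) ∧ c 0 = i) →
    d ∣ (ℓ + 1)}

/-- `A` has an `r × r` tropically non-singular submatrix. -/
def HasNSsub {n m : ℕ} (A : Fin n → Fin m → T) (r : ℕ) : Prop :=
  ∃ f : Fin r → Fin n, ∃ g : Fin r → Fin m,
    Function.Injective f ∧ Function.Injective g ∧
    NonSingular (fun i j => A (f i) (g j))

/-- Tropical rank: maximal size of a tropically non-singular square submatrix. -/
noncomputable def trrk {n m : ℕ} (A : Fin n → Fin m → T) : ℕ :=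
  sSup {r : ℕ | HasNSsub A r}

/-- Tropical convex hull (span) of a finite family of vectors of `T^n`. -/
def tSpan {n m : ℕ} (v : Fin m → (Fin n → T)) : Set (Fin n → T) :=
  { w | ∃ α : Fin m → T, w = fun i => Finset.univ.sup fun j => α j + v j i }

/-- Weak dimension of a tropically convex set: minimal size of a generating family. -/
noncomputable def weakDim {n : ℕ} (X : Set (Fin n → T)) : ℕ :=
  sInf {k : ℕ | ∃ v : Fin k → (Fin n → T), tSpan v = X}

/-- Column rank: weak dimension of the tropical convex hull of the columns. -/
noncomputable def colrk {n m : ℕ} (A : Fin n → Fin m → T) : ℕ :=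
  weakDim (tSpan fun j => fun i => A i j)

/-- Row rank: weak dimension of the tropical convex hull of the rows. -/
noncomputable def rowrk {n m : ℕ} (A : Fin n → Fin m → T) : ℕ :=
  weakDim (tSpan fun i => fun j => A i j)


/-! ### Auxiliary lemmas -/

open Finset

namespace Stmt16Aux

lemma coe_sum {ι : Type*} (s : Finset ι) (g : ι → ℝ) :
    ∑ i ∈ s, ((g i : ℝ) : T) = ((∑ i ∈ s, g i : ℝ) : T) := by
  induction s using Finset.cons_induction with
  | empty => simp
  | cons a s ha ih => rw [Finset.sum_cons, Finset.sum_cons, ih, ← WithBot.coe_add]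

lemma sum_eq_bot {ι : Type*} {s : Finset ι} {f : ι → T} {i : ι} (hi : i ∈ s) (h : f i = ⊥) :
    ∑ j ∈ s, f j = ⊥ := by
  classical
  rw [← Finset.add_sum_erase s f hi, h]
  exact WithBot.bot_add _

lemma squeeze_sum {ι : Type*} {s : Finset ι} {f : ι → T} {g : ι → ℝ}
    (hle : ∀ i ∈ s, f i ≤ ((g i : ℝ) : T))
    (heq : ∑ i ∈ s, f i = ((∑ i ∈ s, g i : ℝ) : T)) :
    ∀ i ∈ s, f i = ((g i : ℝ) : T) := by
  have hnb : ∀ i ∈ s, f i ≠ ⊥ := by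
    intro i hi hbot
    rw [sum_eq_bot hi hbot] at heq
    exact (WithBot.bot_ne_coe heq).elim
  -- choose real values
  have hex : ∀ i ∈ s, ∃ v : ℝ, f i = (v : T) := by
    intro i hi
    rcases WithBot.ne_bot_iff_exists.mp (hnb i hi) with ⟨v, hv⟩
    exact ⟨v, hv.symm⟩
  classical
  choose v hv using fun i (hi : i ∈ s) => hex i hi
  have hsum : ∑ i ∈ s.attach, v i.1 i.2 = ∑ i ∈ s, g i := by
    have h1 : ∑ i ∈ s, f i = ∑ i ∈ s.attach, ((v i.1 i.2 : ℝ) : T) := by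
      rw [← Finset.sum_attach s f]
      exact Finset.sum_congr rfl fun i _ => hv i.1 i.2
    rw [h1, coe_sum] at heq
    exact_mod_cast heq
  have hvle : ∀ i ∈ s.attach, v i.1 i.2 ≤ g i.1 := by
    intro i _
    have := hle i.1 i.2
    rw [hv i.1 i.2] at this
    exact_mod_cast this
  have hveq : ∀ i ∈ s.attach, v i.1 i.2 = g i.1 := by
    by_contra hcon
    push_neg at hcon
    rcases hcon with ⟨i, hi, hne⟩
    have hlt : v i.1 i.2 < g i.1 := lt_of_le_of_ne (hvle i hi) hne
    have : ∑ i ∈ s.attach, v i.1 i.2 < ∑ i ∈ s.attach, g i.1 :=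
      Finset.sum_lt_sum hvle ⟨i, hi, hlt⟩
    rw [hsum, Finset.sum_attach s g] at this
    exact lt_irrefl _ this
  intro i hi
  rw [hv i hi, hveq ⟨i, hi⟩ (Finset.mem_attach _ _)]

lemma squeeze_two {x y : T} {p q : ℝ} (hx : x ≤ (p : T)) (hy : y ≤ (q : T))
    (hsum : x + y = ((p + q : ℝ) : T)) : x = (p : T) ∧ y = (q : T) := by
  have hxb : x ≠ ⊥ := by
    intro h; rw [h, WithBot.bot_add] at hsum; exact WithBot.bot_ne_coe hsum
  have hyb : y ≠ ⊥ := by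
    intro h; rw [h, WithBot.add_bot] at hsum; exact WithBot.bot_ne_coe hsum
  rcases WithBot.ne_bot_iff_exists.mp hxb with ⟨a, ha⟩
  rcases WithBot.ne_bot_iff_exists.mp hyb with ⟨b, hb⟩
  subst ha; subst hb
  rw [← WithBot.coe_add] at hsum
  have h1 : a + b = p + q := by exact_mod_cast hsum
  have h2 : a ≤ p := by exact_mod_cast hx
  have h3 : b ≤ q := by exact_mod_cast hy
  have h4 : a = p := by linarith
  have h5 : b = q := by linarith
  exact ⟨by rw [h4], by rw [h5]⟩

end Stmt16Aux

namespace Stmt16Aux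

variable {n : ℕ}

/-- Weight of the walk `c 0 → c 1 → ⋯ → c m` (`ℕ`-indexed). -/
noncomputable def wwt (A : Fin n → Fin n → T) (m : ℕ) (c : ℕ → Fin n) : T :=
  ∑ k ∈ Finset.range m, A (c k) (c (k + 1))

lemma sum_range_split {M : Type*} [AddCommMonoid M] (f : ℕ → M) (p q : ℕ) :
    ∑ k ∈ Finset.range (p + q), f k = (∑ k ∈ Finset.range p, f k) + ∑ k ∈ Finset.range q, f (p + k) := by
  rw [Finset.range_eq_Ico, ← Finset.sum_Ico_consecutive f (Nat.zero_le p) (Nat.le_add_right p q),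
    Finset.sum_Ico_eq_sum_range]
  simp [Finset.sum_Ico_eq_sum_range]

lemma rotate_one_sum {M : Type*} [AddCommMonoid M] (f : ℕ → M) (m : ℕ) (h : f m = f 0) :
    ∑ k ∈ Finset.range m, f (k + 1) = ∑ k ∈ Finset.range m, f k := by
  cases m with
  | zero => simp
  | succ t =>
    rw [Finset.sum_range_succ, Finset.sum_range_succ' f t, h, add_comm]

lemma periodic_shift_sum {M : Type*} [AddCommMonoid M] (f : ℕ → M) (m : ℕ)
    (hper : ∀ j, f (j + m) = f j) (j0 : ℕ) :
    ∑ k ∈ Finset.range m, f (j0 + k) = ∑ k ∈ Finset.range m, f k := by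
  induction j0 with
  | zero => simp
  | succ t ih =>
    have h1 : ∑ k ∈ Finset.range m, f (t + 1 + k) = ∑ k ∈ Finset.range m, f (t + k) := by
      have := rotate_one_sum (fun k => f (t + k)) m (by simpa [add_comm] using hper t)
      simpa [add_assoc, add_comm 1, add_left_comm] using this
    rw [h1, ih]

/-- Concatenation of walks. -/
def wcat (m1 : ℕ) (c1 c2 : ℕ → Fin n) : ℕ → Fin n :=
  fun k => if k < m1 then c1 k else c2 (k - m1)

lemma wcat_zero {m1 : ℕ} {c1 c2 : ℕ → Fin n} (h : c1 m1 = c2 0) : wcat m1 c1 c2 0 = c1 0 := by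
  unfold wcat
  rcases Nat.eq_zero_or_pos m1 with h0 | h0
  · simp [h0, ← h]
  · simp [h0]

lemma wcat_end {m1 : ℕ} (m2 : ℕ) {c1 c2 : ℕ → Fin n} :
    wcat m1 c1 c2 (m1 + m2) = c2 m2 := by
  unfold wcat
  simp

lemma wcat_wwt {A : Fin n → Fin n → T} {m1 m2 : ℕ} {c1 c2 : ℕ → Fin n} (h : c1 m1 = c2 0) :
    wwt A (m1 + m2) (wcat m1 c1 c2) = wwt A m1 c1 + wwt A m2 c2 := by
  unfold wwt
  rw [sum_range_split]
  congr 1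
  · apply Finset.sum_congr rfl
    intro k hk
    have hk' : k < m1 := Finset.mem_range.mp hk
    rcases Nat.lt_or_ge (k+1) m1 with h1 | h1
    · simp [wcat, hk', h1]
    · have : k + 1 = m1 := le_antisymm hk' h1
      simp [wcat, hk', this, ← h, Nat.lt_irrefl]
  · apply Finset.sum_congr rfl
    intro k hk
    have h1 : ¬ (m1 + k < m1) := by omega
    have h2 : ¬ (m1 + k + 1 < m1) := by omega
    have e1 : m1 + k - m1 = k := by omega
    have e2 : m1 + k + 1 - m1 = k + 1 := by omega
    simp only [wcat, if_neg h1, if_neg h2, e1, e2]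

/-- The "periodization" of a walk: `pzd m c j = c (j % m)`. -/
def pzd (m : ℕ) (c : ℕ → Fin n) : ℕ → Fin n := fun j => c (j % m)

lemma pzd_periodic {m : ℕ} (c : ℕ → Fin n) (j : ℕ) : pzd m c (j + m) = pzd m c j := by
  simp [pzd, Nat.add_mod_right]

lemma pzd_eq {m : ℕ} (c : ℕ → Fin n) {j : ℕ} (h : j < m) : pzd m c j = c j := by
  simp [pzd, Nat.mod_eq_of_lt h]

lemma pzd_arc_periodic (A : Fin n → Fin n → T) {m : ℕ} (c : ℕ → Fin n) (j : ℕ) :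
    A (pzd m c (j + m)) (pzd m c (j + m + 1)) = A (pzd m c j) (pzd m c (j + 1)) := by
  rw [pzd_periodic]
  congr 1
  have : j + m + 1 = (j + 1) + m := by ring
  rw [this, pzd_periodic]

lemma wwt_pzd (A : Fin n → Fin n → T) {m : ℕ} {c : ℕ → Fin n} (hclosed : c m = c 0) :
    wwt A m (pzd m c) = wwt A m c := by
  unfold wwt
  apply Finset.sum_congr rfl
  intro k hk
  have hk' : k < m := Finset.mem_range.mp hk
  rw [pzd_eq c hk']
  congr 1
  rcases Nat.lt_or_ge (k+1) m with h1 | h1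
  · exact pzd_eq c h1
  · have : k + 1 = m := le_antisymm hk' h1
    rw [this]
    simp [pzd, Nat.mod_self, hclosed]

/-- Shift of a walk. -/
def shf (j0 : ℕ) (c : ℕ → Fin n) : ℕ → Fin n := fun k => c (j0 + k)

lemma wwt_shf (A : Fin n → Fin n → T) {m : ℕ} (c : ℕ → Fin n)
    (hper : ∀ j, c (j + m) = c j) (j0 : ℕ) :
    wwt A m (shf j0 c) = wwt A m c := by
  unfold wwt shf
  have hF : ∀ j, A (c (j + m)) (c (j + m + 1)) = A (c j) (c (j + 1)) := by
    intro j
    rw [hper j, show j + m + 1 = (j + 1) + m by ring, hper]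
  have := periodic_shift_sum (fun j => A (c j) (c (j + 1))) m (fun j => by simpa using hF j) j0
  simpa [add_assoc] using this

end Stmt16Aux

namespace Stmt16Aux

variable {n : ℕ}

/-- A critical closed walk. -/
def IsCritW (A : Fin n → Fin n → T) (r : ℝ) (m : ℕ) (c : ℕ → Fin n) : Prop :=
  1 ≤ m ∧ c m = c 0 ∧ wwt A m c = (((m : ℝ) * r : ℝ) : T)

lemma fin_succ_val {t : ℕ} (k : Fin (t + 1)) :
    ((k + 1 : Fin (t + 1))).val = if k.val = t then 0 else k.val + 1 := by
  rcases eq_or_ne k (Fin.last t) with h | h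
  · subst h
    simp [Fin.last_add_one]
  · rw [Fin.val_add_one_of_lt (Fin.lt_last_iff_ne_last.mpr h)]
    have : k.val ≠ t := fun hv => h (Fin.ext hv)
    simp [this]

/-- Convert a closed walk to a `Fin`-indexed circuit with the same weight. -/
lemma cwt_of_walk (A : Fin n → Fin n → T) {m : ℕ} (hm : 1 ≤ m) {c : ℕ → Fin n}
    (hclosed : c m = c 0) :
    cwt A (fun k : Fin ((m - 1) + 1) => c k.val) = wwt A m c := by
  have hm1 : (m - 1) + 1 = m := Nat.succ_pred_eq_of_pos hm
  have hstep : ∀ k : Fin ((m - 1) + 1),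
      A (c k.val) (c ((k + 1 : Fin ((m - 1) + 1))).val) = A (c k.val) (c (k.val + 1)) := by
    intro k
    rw [fin_succ_val k]
    rcases eq_or_ne k.val (m - 1) with h | h
    · rw [if_pos h, h]
      rw [show (m - 1) + 1 = m from hm1, hclosed]
    · rw [if_neg h]
  unfold cwt wwt
  calc ∑ k : Fin ((m - 1) + 1), A (c k.val) (c ((k + 1 : Fin ((m - 1) + 1))).val)
      = ∑ k : Fin ((m - 1) + 1), (fun j => A (c j) (c (j + 1))) k.val :=
        Finset.sum_congr rfl fun k _ => hstep k
    _ = ∑ k ∈ Finset.range ((m - 1) + 1), A (c k) (c (k + 1)) :=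
        Fin.sum_univ_eq_sum_range (fun j => A (c j) (c (j + 1))) ((m - 1) + 1)
    _ = ∑ k ∈ Finset.range m, A (c k) (c (k + 1)) := by rw [hm1]

lemma cast_pred_succ {m : ℕ} (hm : 1 ≤ m) : (((m - 1 : ℕ) : ℝ) + 1) = (m : ℝ) := by
  have h : ((m - 1) + 1 : ℕ) = m := Nat.succ_pred_eq_of_pos hm
  exact_mod_cast congrArg (Nat.cast : ℕ → ℝ) h

/-- Any closed walk of length `m ≥ 1` has weight at most `m·r` when `ρ(A) = r`. -/
lemma wwt_le_of_rho {A : Fin n → Fin n → T} {r : ℝ} (hrho : RhoEq A r) {m : ℕ} (hm : 1 ≤ m)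
    {c : ℕ → Fin n} (hclosed : c m = c 0) :
    wwt A m c ≤ (((m : ℝ) * r : ℝ) : T) := by
  have h := hrho.2 (m - 1) (fun k => c k.val)
  rw [cwt_of_walk A hm hclosed, cast_pred_succ hm] at h
  exact h

/-- Arcs of a critical closed walk are critical arcs. -/
lemma critArc_of_walk {A : Fin n → Fin n → T} {r : ℝ} {m : ℕ} {c : ℕ → Fin n}
    (hc : IsCritW A r m c) {k : ℕ} (hk : k < m) :
    CritArc A r (c k) (c (k + 1)) := by
  obtain ⟨hm, hclosed, hwt⟩ := hc
  have hm1 : (m - 1) + 1 = m := Nat.succ_pred_eq_of_pos hm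
  have hkk : k < (m - 1) + 1 := by omega
  refine ⟨m - 1, fun j : Fin ((m-1)+1) => c j.val, ?_, ⟨⟨k, hkk⟩, ?_, ?_⟩⟩
  · rw [cwt_of_walk A hm hclosed, hwt, cast_pred_succ hm]
  · rfl
  · show c (((⟨k, hkk⟩ : Fin ((m-1)+1)) + 1 : Fin ((m-1)+1))).val = c (k + 1)
    rw [fin_succ_val]
    show c (if k = m - 1 then 0 else k + 1) = c (k + 1)
    rcases eq_or_ne k (m - 1) with h | h
    · rw [if_pos h, show k + 1 = m by omega, hclosed]
    · rw [if_neg h]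

lemma reach_of_walk {A : Fin n → Fin n → T} {r : ℝ} {m : ℕ} {c : ℕ → Fin n}
    (hc : IsCritW A r m c) {p q : ℕ} (hpq : p ≤ q) (hq : q ≤ m) :
    CritReach A r (c p) (c q) := by
  induction q with
  | zero =>
    have h0 : p = 0 := Nat.le_zero.mp hpq
    rw [h0]
    exact Relation.ReflTransGen.refl
  | succ t ih =>
    rcases Nat.lt_or_ge p (t + 1) with h1 | h1
    · have h2 : p ≤ t := Nat.lt_succ_iff.mp h1
      have h3 : t ≤ m := le_trans (Nat.le_succ t) hq
      exact Relation.ReflTransGen.tail (ih h2 h3) (critArc_of_walk ⟨hc.1, hc.2⟩ (by omega))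
    · have h0 : p = t + 1 := le_antisymm hpq h1
      rw [h0]
      exact Relation.ReflTransGen.refl

lemma sameScc_of_walk {A : Fin n → Fin n → T} {r : ℝ} {m : ℕ} {c : ℕ → Fin n}
    (hc : IsCritW A r m c) {k : ℕ} (hk : k ≤ m) :
    SameScc A r (c 0) (c k) := by
  constructor
  · exact reach_of_walk hc (Nat.zero_le k) hk
  · have h := reach_of_walk hc hk (le_refl m)
    rwa [hc.2.1] at h

lemma sameScc_symm {A : Fin n → Fin n → T} {r : ℝ} {i j : Fin n} (h : SameScc A r i j) :
    SameScc A r j i := ⟨h.2, h.1⟩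

lemma sameScc_trans {A : Fin n → Fin n → T} {r : ℝ} {i j k : Fin n} (h1 : SameScc A r i j)
    (h2 : SameScc A r j k) : SameScc A r i k :=
  ⟨Relation.ReflTransGen.trans h1.1 h2.1, Relation.ReflTransGen.trans h2.2 h1.2⟩

/-- `cycAt` divides the length of any critical closed walk based at `i`, and is positive. -/
lemma cycAt_dvd {A : Fin n → Fin n → T} {r : ℝ} {i : Fin n}
    (hbase : ∃ m c, IsCritW A r m c ∧ c 0 = i) :
    (∀ m c, IsCritW A r m c → c 0 = i → cycAt A r i ∣ m) ∧ 1 ≤ cycAt A r i := by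
  classical
  have hmem : ∀ d, (d ∈ {d : ℕ | ∀ ℓ : ℕ,
      (∃ c : Fin (ℓ + 1) → Fin n, cwt A c = ((((ℓ : ℝ) + 1) * r : ℝ) : T) ∧ c 0 = i) →
      d ∣ (ℓ + 1)}) → ∀ m c, IsCritW A r m c → c 0 = i → d ∣ m := by
    intro d hd m c hc hc0
    obtain ⟨hm, hclosed, hwt⟩ := hc
    have hm1 : (m - 1) + 1 = m := Nat.succ_pred_eq_of_pos hm
    have h := hd (m - 1) ⟨fun j : Fin ((m-1)+1) => c j.val,
      by rw [cwt_of_walk A hm hclosed, hwt, cast_pred_succ hm],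
      by show c ((0 : Fin ((m-1)+1)).val) = i; simpa using hc0⟩
    rwa [hm1] at h
  obtain ⟨m0, c0, hc0, hc00⟩ := hbase
  have hbdd : BddAbove {d : ℕ | ∀ ℓ : ℕ,
      (∃ c : Fin (ℓ + 1) → Fin n, cwt A c = ((((ℓ : ℝ) + 1) * r : ℝ) : T) ∧ c 0 = i) →
      d ∣ (ℓ + 1)} := by
    refine ⟨m0, fun d hd => ?_⟩
    exact Nat.le_of_dvd hc0.1 (hmem d hd m0 c0 hc0 hc00)
  have h1S : (1 : ℕ) ∈ {d : ℕ | ∀ ℓ : ℕ,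
      (∃ c : Fin (ℓ + 1) → Fin n, cwt A c = ((((ℓ : ℝ) + 1) * r : ℝ) : T) ∧ c 0 = i) →
      d ∣ (ℓ + 1)} := fun ℓ _ => one_dvd _
  have hsup := Nat.sSup_mem ⟨1, h1S⟩ hbdd
  exact ⟨hmem _ hsup, le_csSup hbdd h1S⟩

/-- From a critical node, get a critical closed walk based at `i`. -/
lemma walk_of_critNode {A : Fin n → Fin n → T} {r : ℝ} {i : Fin n} (h : CritNode A r i) :
    ∃ m c, IsCritW A r m c ∧ c 0 = i := by
  obtain ⟨ℓ, c, hwt, k, hk⟩ := h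
  have hwt' : cwt A c = ((((ℓ + 1 : ℕ) : ℝ) * r : ℝ) : T) := by
    rw [hwt]; congr 2; push_cast; ring
  set cw : ℕ → Fin n := fun j => c ⟨j % (ℓ + 1), Nat.mod_lt _ (Nat.succ_pos ℓ)⟩ with hcw
  have hper : ∀ j, cw (j + (ℓ + 1)) = cw j := by
    intro j
    simp only [hcw]
    congr 1
    ext
    simp [Nat.add_mod_right]
  have hv1 : ∀ j : Fin (ℓ + 1), cw j.val = c j := by
    intro j
    simp only [hcw]
    congr 1
    ext
    simp [Nat.mod_eq_of_lt j.isLt]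
  have hv2 : ∀ j : Fin (ℓ + 1), cw (j.val + 1) = c (j + 1) := by
    intro j
    simp only [hcw]
    congr 1
    ext
    show (j.val + 1) % (ℓ + 1) = ((j + 1 : Fin (ℓ + 1))).val
    rw [fin_succ_val]
    rcases eq_or_ne j.val ℓ with h | h
    · simp [h, Nat.mod_self]
    · have hlt : j.val + 1 < ℓ + 1 := by have := j.isLt; omega
      simp [h, Nat.mod_eq_of_lt hlt]
  have hwwt : wwt A (ℓ + 1) cw = ((((ℓ + 1 : ℕ) : ℝ) * r : ℝ) : T) := by
    have hcwt : cwt A c = ∑ p ∈ Finset.range (ℓ + 1), A (cw p) (cw (p + 1)) := by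
      unfold cwt
      calc ∑ j : Fin (ℓ + 1), A (c j) (c (j + 1))
          = ∑ j : Fin (ℓ + 1), (fun p => A (cw p) (cw (p + 1))) j.val :=
            Finset.sum_congr rfl fun j _ => by simp only; rw [hv1, hv2]
        _ = ∑ p ∈ Finset.range (ℓ + 1), A (cw p) (cw (p + 1)) :=
            Fin.sum_univ_eq_sum_range (fun p => A (cw p) (cw (p + 1))) (ℓ + 1)
    unfold wwt
    rw [← hcwt, hwt']
  refine ⟨ℓ + 1, shf k.val cw, ⟨Nat.succ_le_succ (Nat.zero_le ℓ), ?_, ?_⟩, ?_⟩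
  · show cw (k.val + (ℓ + 1)) = cw (k.val + 0)
    rw [hper]
    simp
  · rw [wwt_shf A cw hper k.val, hwwt]
  · show cw (k.val + 0) = i
    rw [Nat.add_zero, ← hk]
    simp only [hcw]
    congr 1
    ext
    simp [Nat.mod_eq_of_lt k.isLt]

end Stmt16Aux

namespace Stmt16Aux

variable {n : ℕ}

lemma nsmul_coe (M : ℕ) (v : ℝ) : M • ((v : ℝ) : T) = (((M : ℝ) * v : ℝ) : T) := by
  induction M with
  | zero => simp
  | succ t ih =>
    rw [succ_nsmul, ih, ← WithBot.coe_add]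
    congr 1
    push_cast
    ring

/-- Extraction of an elementary (injective) critical closed walk. -/
lemma elementary_walk {A : Fin n → Fin n → T} {r : ℝ} (hrho : RhoEq A r) :
    ∀ m, ∀ c : ℕ → Fin n, IsCritW A r m c →
      ∃ m' c', IsCritW A r m' c' ∧ c' 0 = c 0 ∧
        (∀ a b, a < m' → b < m' → c' a = c' b → a = b) := by
  intro m
  induction m using Nat.strong_induction_on with
  | _ m ih =>
    intro c hc
    by_cases hinj : ∀ a b, a < m → b < m → c a = c b → a = b
    · exact ⟨m, c, hc, rfl, hinj⟩
    · push_neg at hinj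
      obtain ⟨a0, b0, ha0, hb0, hab0, hne0⟩ := hinj
      obtain ⟨a, b, hab, ha, hb, hlt⟩ :
          ∃ a b, c a = c b ∧ a < m ∧ b < m ∧ a < b := by
        rcases Nat.lt_or_ge a0 b0 with h | h
        · exact ⟨a0, b0, hab0, ha0, hb0, h⟩
        · exact ⟨b0, a0, hab0.symm, hb0, ha0, by omega⟩
      obtain ⟨hm, hclosed, hwt⟩ := hc
      set m2 := m - (b - a) with hm2
      set c2 : ℕ → Fin n := fun k => if k < a then c k else c (k + (b - a)) with hc2
      have hc2low : ∀ k, k < a → c2 k = c k := fun k hk => by simp [hc2, hk]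
      have hc2high : ∀ k, a ≤ k → c2 k = c (k + (b - a)) := fun k hk => by
        simp [hc2, Nat.not_lt.mpr hk]
      have hc20 : c2 0 = c 0 := by
        rcases Nat.eq_zero_or_pos a with h0 | h0
        · rw [hc2high 0 (by omega)]
          subst h0
          simpa using hab.symm
        · exact hc2low 0 h0
      have hc2closed : c2 m2 = c2 0 := by
        rw [hc2high m2 (by omega), hc20, show m2 + (b - a) = m by omega, hclosed]
      set f : ℕ → T := fun k => A (c k) (c (k + 1)) with hf
      have h1 : ∑ k ∈ Finset.range m, f k =
          (∑ k ∈ Finset.range a, f k) + ∑ k ∈ Finset.range (m - a), f (a + k) := by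
        have h := sum_range_split f a (m - a)
        rwa [show a + (m - a) = m by omega] at h
      have h2 : ∑ k ∈ Finset.range (m - a), f (a + k) =
          (∑ k ∈ Finset.range (b - a), f (a + k)) + ∑ k ∈ Finset.range (m - b), f (b + k) := by
        have h := sum_range_split (fun k => f (a + k)) (b - a) (m - b)
        rw [show (b - a) + (m - b) = m - a by omega] at h
        rw [h]
        congr 1
        apply Finset.sum_congr rfl
        intro k _
        show f (a + (b - a + k)) = f (b + k)
        congr 1
        omega
      have h3 : wwt A m2 c2 =
          (∑ k ∈ Finset.range a, f k) + ∑ k ∈ Finset.range (m - b), f (b + k) := by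
        unfold wwt
        have h := sum_range_split (fun k => A (c2 k) (c2 (k + 1))) a (m - b)
        rw [show a + (m - b) = m2 by omega] at h
        rw [h]
        congr 1
        · apply Finset.sum_congr rfl
          intro k hk
          have hk' : k < a := Finset.mem_range.mp hk
          show A (c2 k) (c2 (k + 1)) = f k
          rcases Nat.lt_or_ge (k + 1) a with hlt1 | hge1
          · rw [hc2low k hk', hc2low _ hlt1]
          · have hk1 : k + 1 = a := by omega
            rw [hc2low k hk', hc2high _ (by omega), hk1, show a + (b - a) = b by omega]
            show A (c k) (c b) = A (c k) (c (k + 1))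
            rw [← hab, hk1]
        · apply Finset.sum_congr rfl
          intro k _
          show A (c2 (a + k)) (c2 (a + k + 1)) = f (b + k)
          rw [hc2high (a + k) (by omega), hc2high (a + k + 1) (by omega)]
          show A (c (a + k + (b - a))) (c (a + k + 1 + (b - a))) = A (c (b + k)) (c (b + k + 1))
          rw [show a + k + (b - a) = b + k by omega, show a + k + 1 + (b - a) = b + k + 1 by omega]
      have h4 : wwt A (b - a) (shf a c) = ∑ k ∈ Finset.range (b - a), f (a + k) := by
        unfold wwt shf
        exact Finset.sum_congr rfl fun k _ => rfl
      have hsplit : wwt A m c = wwt A (b - a) (shf a c) + wwt A m2 c2 := by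
        show ∑ k ∈ Finset.range m, f k = _
        rw [h1, h2, h3, h4]
        abel
      have hb1 : (1 : ℕ) ≤ b - a := by omega
      have hm21 : (1 : ℕ) ≤ m2 := by omega
      have hclosed1 : (shf a c) (b - a) = (shf a c) 0 := by
        show c (a + (b - a)) = c (a + 0)
        rw [show a + (b - a) = b by omega, Nat.add_zero, ← hab]
      have hle1 := wwt_le_of_rho hrho hb1 hclosed1
      have hle2 := wwt_le_of_rho hrho hm21 hc2closed
      have hsum : wwt A (b - a) (shf a c) + wwt A m2 c2 =
          ((((b - a : ℕ) : ℝ) * r + ((m2 : ℕ) : ℝ) * r : ℝ) : T) := by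
        rw [← hsplit, hwt]
        congr 1
        have hcast : ((b - a : ℕ) : ℝ) + ((m2 : ℕ) : ℝ) = (m : ℝ) := by
          have h : (b - a) + m2 = m := by omega
          exact_mod_cast congrArg (Nat.cast : ℕ → ℝ) h
        rw [← hcast]
        ring
      obtain ⟨-, hcrit2⟩ := squeeze_two hle1 hle2 hsum
      obtain ⟨m', c', hc', h0', hinj'⟩ := ih m2 (by omega) c2 ⟨hm21, hc2closed, hcrit2⟩
      exact ⟨m', c', hc', by rw [h0', hc20], hinj'⟩

section Mtrick

variable {P : Fin n → Fin n → T} {r : ℝ} (hrho : RhoEq P r) (π : Equiv.Perm (Fin n))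

lemma orbit_sum :
    ∑ y : Fin n, wwt P (orderOf π) (fun k => (π ^ k) y) = (orderOf π) • wt P π := by
  unfold wwt
  rw [Finset.sum_comm]
  have h : ∀ k ∈ Finset.range (orderOf π),
      ∑ y : Fin n, P ((π ^ k) y) ((π ^ (k + 1)) y) = wt P π := by
    intro k _
    have h2 : ∀ y : Fin n, P ((π ^ k) y) ((π ^ (k + 1)) y) = (fun z => P z (π z)) ((π ^ k) y) := by
      intro y
      simp only
      rw [pow_succ']
      rfl
    calc ∑ y : Fin n, P ((π ^ k) y) ((π ^ (k + 1)) y)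
        = ∑ y : Fin n, (fun z => P z (π z)) ((π ^ k) y) :=
          Finset.sum_congr rfl fun y _ => h2 y
      _ = ∑ z : Fin n, P z (π z) := Equiv.sum_comp (π ^ k) (fun z => P z (π z))
  rw [Finset.sum_congr rfl h, Finset.sum_const, Finset.card_range]

lemma orbit_closed (y : Fin n) : (fun k => (π ^ k) y) (orderOf π) = (fun k => (π ^ k) y) 0 := by
  simp [pow_orderOf_eq_one π]

include hrho in
/-- `wt` is bounded by `n·ρ`. -/
lemma wt_le_of_rho : wt P π ≤ (((n : ℝ) * r : ℝ) : T) := by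
  classical
  have hM1 : 1 ≤ orderOf π := orderOf_pos π
  have hbound : ∀ y : Fin n, wwt P (orderOf π) (fun k => (π ^ k) y) ≤
      (((orderOf π : ℝ) * r : ℝ) : T) :=
    fun y => wwt_le_of_rho hrho hM1 (orbit_closed π y)
  rcases eq_or_ne (wt P π) ⊥ with hbot | hbot
  · rw [hbot]; exact bot_le
  rcases WithBot.ne_bot_iff_exists.mp hbot with ⟨v, hv⟩
  have h1 : (orderOf π) • wt P π ≤ (((n : ℝ) * ((orderOf π : ℝ) * r) : ℝ) : T) := by
    rw [← orbit_sum]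
    calc ∑ y : Fin n, wwt P (orderOf π) (fun k => (π ^ k) y)
        ≤ ∑ _y : Fin n, ((((orderOf π : ℝ) * r : ℝ)) : T) := Finset.sum_le_sum fun y _ => hbound y
      _ = (((n : ℝ) * ((orderOf π : ℝ) * r) : ℝ) : T) := by
          rw [coe_sum]
          congr 1
          rw [Finset.sum_const, Finset.card_univ, Fintype.card_fin, nsmul_eq_mul]
  rw [← hv, nsmul_coe] at h1
  have h2 : (orderOf π : ℝ) * v ≤ (n : ℝ) * ((orderOf π : ℝ) * r) := by exact_mod_cast h1
  rw [← hv]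
  have hMpos : (0 : ℝ) < (orderOf π : ℝ) := by exact_mod_cast hM1
  have h3 : v ≤ (n : ℝ) * r := by nlinarith
  exact_mod_cast h3

include hrho in
/-- If `wt P π` attains `n·ρ`, every arc of `π` is critical. -/
lemma arcs_crit_of_wt_eq (heq : wt P π = (((n : ℝ) * r : ℝ) : T)) (x : Fin n) :
    CritArc P r x (π x) := by
  classical
  have hM1 : 1 ≤ orderOf π := orderOf_pos π
  have hbound : ∀ y : Fin n, wwt P (orderOf π) (fun k => (π ^ k) y) ≤
      (((orderOf π : ℝ) * r : ℝ) : T) :=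
    fun y => wwt_le_of_rho hrho hM1 (orbit_closed π y)
  have htotal : ∑ y : Fin n, wwt P (orderOf π) (fun k => (π ^ k) y) =
      ((∑ _y : Fin n, (orderOf π : ℝ) * r : ℝ) : T) := by
    rw [orbit_sum, heq, nsmul_coe]
    congr 1
    rw [Finset.sum_const, Finset.card_univ, Fintype.card_fin, nsmul_eq_mul]
    ring
  have hsq := squeeze_sum (fun y _ => hbound y) htotal x (Finset.mem_univ x)
  have hcw : IsCritW P r (orderOf π) (fun k => (π ^ k) x) := ⟨hM1, orbit_closed π x, hsq⟩
  have harc := critArc_of_walk hcw (show 0 < orderOf π from hM1)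
  simpa using harc

end Mtrick

end Stmt16Aux

namespace Stmt16Aux

variable {n : ℕ}

/-- KEY exchange lemma: if all factors have non-positive permanent but the product has a
permutation of positive weight, that weight is also attained by another permutation. -/
lemma key (hn : 0 < n) (L : List (Fin n → Fin n → T))
    (hL : ∀ M ∈ L, ∀ τ : Equiv.Perm (Fin n), wt M τ ≤ 0) :
    ∀ π : Equiv.Perm (Fin n), (0 : T) < wt (tProd L) π →
      ∃ π' : Equiv.Perm (Fin n), π' ≠ π ∧ wt (tProd L) π ≤ wt (tProd L) π' := by
  classical
  have hne : Nonempty (Fin n) := ⟨⟨0, hn⟩⟩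
  induction L with
  | nil =>
    intro π hpos
    exfalso
    have hle : wt (tProd []) π ≤ 0 := by
      have hid : tProd ([] : List (Fin n → Fin n → T)) = tId n := rfl
      rw [hid]
      unfold wt tId
      apply Finset.sum_nonpos
      intro i _
      show (if i = π i then (0 : T) else ⊥) ≤ 0
      by_cases h : i = π i
      · rw [if_pos h]
      · rw [if_neg h]
        exact bot_le
    exact absurd (lt_of_lt_of_le hpos hle) (lt_irrefl 0)
  | cons M L' ih =>
    intro π hpos
    set Q' := tProd L' with hQ'
    have hwt : wt (tProd (M :: L')) π =
        ∑ i : Fin n, Finset.univ.sup (fun k => M i k + Q' k (π i)) := rfl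
    -- attainment
    have hatt : ∀ i : Fin n, ∃ k : Fin n,
        Finset.univ.sup (fun k => M i k + Q' k (π i)) = M i k + Q' k (π i) := by
      intro i
      obtain ⟨k, _, hk⟩ := Finset.exists_mem_eq_sup Finset.univ Finset.univ_nonempty
        (fun k => M i k + Q' k (π i))
      exact ⟨k, hk⟩
    choose h hh using hatt
    have hS : wt (tProd (M :: L')) π = ∑ i : Fin n, (M i (h i) + Q' (h i) (π i)) := by
      rw [hwt]
      exact Finset.sum_congr rfl fun i _ => hh i
    have hLB : ∀ (ρ : Equiv.Perm (Fin n)) (g : Fin n → Fin n),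
        ∑ i : Fin n, (M i (g i) + Q' (g i) (ρ i)) ≤ wt (tProd (M :: L')) ρ := by
      intro ρ g
      show _ ≤ ∑ i : Fin n, Finset.univ.sup (fun k => M i k + Q' k (ρ i))
      exact Finset.sum_le_sum fun i _ =>
        Finset.le_sup (f := fun k => M i k + Q' k (ρ i)) (Finset.mem_univ (g i))
    by_cases hinj : Function.Injective h
    · -- all layers permutations
      set hB : Equiv.Perm (Fin n) :=
        Equiv.ofBijective h ((Finite.injective_iff_bijective).mp hinj) with hhB
      have happ : ∀ i, hB i = h i := fun i => rfl
      set ρ : Equiv.Perm (Fin n) := hB.symm.trans π with hρ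
      have hsplitQ : ∀ (ρ' : Equiv.Perm (Fin n)),
          ∑ i : Fin n, (M i (h i) + Q' (h i) (ρ' (hB i))) = wt M hB + wt Q' ρ' := by
        intro ρ'
        rw [Finset.sum_add_distrib]
        congr 1
        exact Equiv.sum_comp hB (fun j => Q' j (ρ' j))
      have hsplit : wt (tProd (M :: L')) π = wt M hB + wt Q' ρ := by
        rw [hS, ← hsplitQ ρ]
        apply Finset.sum_congr rfl
        intro i _
        congr 2
        show π i = ρ (hB i)
        rw [hρ]
        simp only [Equiv.trans_apply, Equiv.symm_apply_apply]
      have hρpos : (0 : T) < wt Q' ρ := by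
        apply lt_of_lt_of_le hpos
        rw [hsplit]
        calc wt M hB + wt Q' ρ ≤ 0 + wt Q' ρ :=
              add_le_add_left (hL M List.mem_cons_self hB) _
          _ = wt Q' ρ := zero_add _
      obtain ⟨ρ', hρ'ne, hρ'ge⟩ := ih (fun N hN => hL N (List.mem_cons_of_mem M hN)) ρ hρpos
      refine ⟨hB.trans ρ', ?_, ?_⟩
      · intro hcontra
        apply hρ'ne
        apply Equiv.ext
        intro j
        rw [hρ]
        simp only [Equiv.trans_apply]
        have hcg := congrArg (fun e : Equiv.Perm (Fin n) => e (hB.symm j)) hcontra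
        simpa using hcg
      · calc wt (tProd (M :: L')) π = wt M hB + wt Q' ρ := hsplit
          _ ≤ wt M hB + wt Q' ρ' := add_le_add_right hρ'ge _
          _ = ∑ i : Fin n, (M i (h i) + Q' (h i) (ρ' (hB i))) := (hsplitQ ρ').symm
          _ = ∑ i : Fin n, (M i (h i) + Q' (h i) ((hB.trans ρ') i)) := rfl
          _ ≤ wt (tProd (M :: L')) (hB.trans ρ') := hLB _ h
    · -- tail swap
      obtain ⟨i1, i2, heq12, hne12⟩ := Function.not_injective_iff.mp hinj
      set π' : Equiv.Perm (Fin n) := (Equiv.swap i1 i2).trans π with hπ'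
      have hπ'app : ∀ i, π' i = π (Equiv.swap i1 i2 i) := fun i => rfl
      have hπ'ne : π' ≠ π := by
        intro hcontra
        have := congrArg (fun e : Equiv.Perm (Fin n) => e i1) hcontra
        simp only [hπ'app] at this
        rw [Equiv.swap_apply_left] at this
        exact hne12 ((π.injective this).symm)
      have hsum_eq : ∑ i : Fin n, (M i (h i) + Q' (h i) (π' i)) =
          ∑ i : Fin n, (M i (h i) + Q' (h i) (π i)) := by
        set F : Fin n → T := fun i => M i (h i) + Q' (h i) (π i) with hF
        set F' : Fin n → T := fun i => M i (h i) + Q' (h i) (π' i) with hF'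
        have hFF' : ∀ i, i ≠ i1 → i ≠ i2 → F' i = F i := by
          intro i h1 h2
          simp only [hF, hF']
          congr 2
          rw [hπ'app, Equiv.swap_apply_of_ne_of_ne h1 h2]
        have hmem2 : i2 ∈ Finset.univ.erase i1 :=
          Finset.mem_erase.mpr ⟨Ne.symm hne12, Finset.mem_univ i2⟩
        have key2 : F' i1 + F' i2 = F i1 + F i2 := by
          simp only [hF, hF', hπ'app, Equiv.swap_apply_left, Equiv.swap_apply_right, heq12]
          abel
        have expand : ∀ G : Fin n → T, ∑ i : Fin n, G i =
            G i1 + (G i2 + ∑ i ∈ (Finset.univ.erase i1).erase i2, G i) := by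
          intro G
          rw [Finset.add_sum_erase _ G hmem2, Finset.add_sum_erase _ G (Finset.mem_univ i1)]
        have hrest : ∑ i ∈ (Finset.univ.erase i1).erase i2, F' i
            = ∑ i ∈ (Finset.univ.erase i1).erase i2, F i := by
          apply Finset.sum_congr rfl
          intro i hi
          have h2 : i ≠ i2 := (Finset.mem_erase.mp hi).1
          have h1 : i ≠ i1 := (Finset.mem_erase.mp (Finset.mem_erase.mp hi).2).1
          exact hFF' i h1 h2
        rw [expand F, expand F', hrest, ← add_assoc (F' i1), ← add_assoc (F i1), key2]
      refine ⟨π', hπ'ne, ?_⟩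
      calc wt (tProd (M :: L')) π = ∑ i : Fin n, (M i (h i) + Q' (h i) (π i)) := hS
        _ = ∑ i : Fin n, (M i (h i) + Q' (h i) (π' i)) := hsum_eq.symm
        _ ≤ wt (tProd (M :: L')) π' := hLB π' h

end Stmt16Aux

namespace Stmt16Aux

variable {n : ℕ}

/-- From a critical arc, get a periodic critical closed walk starting with that arc. -/
lemma walk_of_critArc {A : Fin n → Fin n → T} {r : ℝ} {u w : Fin n} (h : CritArc A r u w) :
    ∃ m E, IsCritW A r m E ∧ (∀ j, E (j + m) = E j) ∧ E 0 = u ∧ E 1 = w := by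
  obtain ⟨ℓ, c, hwt, k, hku, hkw⟩ := h
  have hwt' : cwt A c = ((((ℓ + 1 : ℕ) : ℝ) * r : ℝ) : T) := by
    rw [hwt]; congr 2; push_cast; ring
  set cw : ℕ → Fin n := fun j => c ⟨j % (ℓ + 1), Nat.mod_lt _ (Nat.succ_pos ℓ)⟩ with hcw
  have hper : ∀ j, cw (j + (ℓ + 1)) = cw j := by
    intro j
    simp only [hcw]
    congr 1
    ext
    simp [Nat.add_mod_right]
  have hv1 : ∀ j : Fin (ℓ + 1), cw j.val = c j := by
    intro j
    simp only [hcw]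
    congr 1
    ext
    simp [Nat.mod_eq_of_lt j.isLt]
  have hv2 : ∀ j : Fin (ℓ + 1), cw (j.val + 1) = c (j + 1) := by
    intro j
    simp only [hcw]
    congr 1
    ext
    show (j.val + 1) % (ℓ + 1) = ((j + 1 : Fin (ℓ + 1))).val
    rw [fin_succ_val]
    rcases eq_or_ne j.val ℓ with h | h
    · simp [h, Nat.mod_self]
    · have hlt : j.val + 1 < ℓ + 1 := by have := j.isLt; omega
      simp [h, Nat.mod_eq_of_lt hlt]
  have hwwt : wwt A (ℓ + 1) cw = ((((ℓ + 1 : ℕ) : ℝ) * r : ℝ) : T) := by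
    have hcwt : cwt A c = ∑ p ∈ Finset.range (ℓ + 1), A (cw p) (cw (p + 1)) := by
      unfold cwt
      calc ∑ j : Fin (ℓ + 1), A (c j) (c (j + 1))
          = ∑ j : Fin (ℓ + 1), (fun p => A (cw p) (cw (p + 1))) j.val :=
            Finset.sum_congr rfl fun j _ => by simp only; rw [hv1, hv2]
        _ = ∑ p ∈ Finset.range (ℓ + 1), A (cw p) (cw (p + 1)) :=
            Fin.sum_univ_eq_sum_range (fun p => A (cw p) (cw (p + 1))) (ℓ + 1)
    unfold wwt
    rw [← hcwt, hwt']
  refine ⟨ℓ + 1, shf k.val cw, ⟨Nat.succ_le_succ (Nat.zero_le ℓ), ?_, ?_⟩, ?_, ?_, ?_⟩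
  · show cw (k.val + (ℓ + 1)) = cw (k.val + 0)
    rw [hper]
    simp
  · rw [wwt_shf A cw hper k.val, hwwt]
  · intro j
    show cw (k.val + (j + (ℓ + 1))) = cw (k.val + j)
    rw [show k.val + (j + (ℓ + 1)) = (k.val + j) + (ℓ + 1) by omega, hper]
  · show cw (k.val + 0) = u
    rw [Nat.add_zero, ← hku]
    exact hv1 k
  · show cw (k.val + 1) = w
    rw [← hkw]
    exact hv2 k

end Stmt16Aux

open Stmt16Aux

/-- If each `A(t)` has `ρ = 0` and ultimate rank `n` (critical graph a
permutation graph), and the product `P = A(1) ⊙ ⋯ ⊙ A(ℓ)` has a circuit of strictly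
positive weight, then `urk(P) < n`. -/
theorem stmt16 {n l : ℕ} (A : Fin l → (Fin n → Fin n → T))
    (hrho : ∀ t, RhoEq (A t) 0)
    (hurk : ∀ t, ∃ τ : Equiv.Perm (Fin n), ∀ i j, CritArc (A t) 0 i j ↔ j = τ i)
    (P : Fin n → Fin n → T) (hP : P = tProd (List.ofFn A))
    (hpos : ∃ ℓ : ℕ, ∃ c : Fin (ℓ + 1) → Fin n, (0 : T) < cwt P c) :
    ∀ r' : ℝ, RhoEq P r' → ∀ R : Finset (Fin n), SccReps P r' R →
      (∑ i ∈ R, cycAt P r' i) < n := by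
  classical
  intro r' hrp R hRR
  by_contra hcon
  push_neg at hcon
  obtain ⟨ℓ0, c0, hc0⟩ := hpos
  have hn : 0 < n := (c0 0).pos
  have hr' : 0 < r' := by
    have hb := hrp.2 ℓ0 c0
    have h1 : (0 : T) < ((((ℓ0 : ℝ) + 1) * r' : ℝ) : T) := lt_of_lt_of_le hc0 hb
    have h2 : ((0 : ℝ) : T) < ((((ℓ0 : ℝ) + 1) * r' : ℝ) : T) := by
      rwa [WithBot.coe_zero]
    have h3 : (0 : ℝ) < ((ℓ0 : ℝ) + 1) * r' := by exact_mod_cast h2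
    nlinarith [Nat.cast_nonneg (α := ℝ) ℓ0]
  -- elementary walks for each representative
  have hwalks : ∀ i ∈ R, ∃ m c, (IsCritW P r' m c ∧ c 0 = i) ∧
      (∀ a b, a < m → b < m → c a = c b → a = b) := by
    intro i hi
    obtain ⟨m0, cw0, hcw0, h00⟩ := walk_of_critNode (hRR.1 i hi)
    obtain ⟨m', c', hc', h0', hinj'⟩ := elementary_walk hrp m0 cw0 hcw0
    exact ⟨m', c', ⟨hc', by rw [h0', h00]⟩, hinj'⟩
  choose! mm cc hcc hinj using hwalks
  have hcrit : ∀ i ∈ R, IsCritW P r' (mm i) (cc i) := fun i hi => (hcc i hi).1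
  have h0 : ∀ i ∈ R, cc i 0 = i := fun i hi => (hcc i hi).2
  have hm1 : ∀ i ∈ R, 1 ≤ mm i := fun i hi => (hcrit i hi).1
  set N : Fin n → Finset (Fin n) := fun i => (Finset.range (mm i)).image (cc i) with hN
  have hcard : ∀ i ∈ R, (N i).card = mm i := by
    intro i hi
    rw [hN]
    rw [Finset.card_image_of_injOn, Finset.card_range]
    intro a ha b hb hab
    exact hinj i hi a b (Finset.mem_range.mp ha) (Finset.mem_range.mp hb) hab
  have hsccN : ∀ i ∈ R, ∀ x ∈ N i, SameScc P r' i x := by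
    intro i hi x hx
    obtain ⟨k, hk, rfl⟩ := Finset.mem_image.mp hx
    have := sameScc_of_walk (hcrit i hi) (le_of_lt (Finset.mem_range.mp hk))
    rwa [h0 i hi] at this
  have hdisj : ∀ i ∈ R, ∀ j ∈ R, i ≠ j → Disjoint (N i) (N j) := by
    intro i hi j hj hij
    rw [Finset.disjoint_left]
    intro x hxi hxj
    exact hRR.2.1 i hi j hj hij
      (sameScc_trans (hsccN i hi x hxi) (sameScc_symm (hsccN j hj x hxj)))
  have hdvd : ∀ i ∈ R, (∀ m c, IsCritW P r' m c → c 0 = i → cycAt P r' i ∣ m)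
      ∧ 1 ≤ cycAt P r' i :=
    fun i hi => cycAt_dvd ⟨mm i, cc i, hcrit i hi, h0 i hi⟩
  have hcycle : ∀ i ∈ R, cycAt P r' i ≤ mm i := fun i hi =>
    Nat.le_of_dvd (hm1 i hi) ((hdvd i hi).1 (mm i) (cc i) (hcrit i hi) (h0 i hi))
  have hcardsum : (R.biUnion N).card = ∑ i ∈ R, (N i).card := Finset.card_biUnion hdisj
  have hle_n : ∑ i ∈ R, mm i ≤ n := by
    calc ∑ i ∈ R, mm i = ∑ i ∈ R, (N i).card := (Finset.sum_congr rfl fun i hi => (hcard i hi).symm)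
      _ = (R.biUnion N).card := hcardsum.symm
      _ ≤ Fintype.card (Fin n) := Finset.card_le_univ _
      _ = n := Fintype.card_fin n
  have hsum_le : ∑ i ∈ R, cycAt P r' i ≤ ∑ i ∈ R, mm i := Finset.sum_le_sum hcycle
  have hEq1 : ∑ i ∈ R, cycAt P r' i = n := by omega
  have hEq2 : ∑ i ∈ R, mm i = n := le_antisymm hle_n (by omega)
  have hptwise : ∀ i ∈ R, cycAt P r' i = mm i := by
    by_contra hcon2
    push_neg at hcon2
    obtain ⟨i0, hi0, hne0⟩ := hcon2
    have : ∑ i ∈ R, cycAt P r' i < ∑ i ∈ R, mm i :=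
      Finset.sum_lt_sum hcycle ⟨i0, hi0, lt_of_le_of_ne (hcycle i0 hi0) hne0⟩
    omega
  have hcover : R.biUnion N = Finset.univ := by
    apply Finset.eq_univ_of_card
    rw [Fintype.card_fin, hcardsum, Finset.sum_congr rfl hcard]
    exact hEq2
  have hrep : ∀ x : Fin n, ∃ i, i ∈ R ∧ ∃ k, k < mm i ∧ cc i k = x := by
    intro x
    have hx : x ∈ R.biUnion N := hcover.symm ▸ Finset.mem_univ x
    obtain ⟨i, hi, hxi⟩ := Finset.mem_biUnion.mp hx
    obtain ⟨k, hk, hck⟩ := Finset.mem_image.mp hxi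
    exact ⟨i, hi, k, Finset.mem_range.mp hk, hck⟩
  choose ix hix kx hkx hckx using hrep
  have hmemN : ∀ i ∈ R, ∀ k, k < mm i → cc i k ∈ N i := by
    intro i hi k hk
    exact Finset.mem_image.mpr ⟨k, Finset.mem_range.mpr hk, rfl⟩
  have huniq1 : ∀ i ∈ R, ∀ k, k < mm i → ix (cc i k) = i := by
    intro i hi k hk
    by_contra hne
    have h1 : cc i k ∈ N i := hmemN i hi k hk
    have h2 : cc i k ∈ N (ix (cc i k)) := by
      have h3 := hmemN _ (hix (cc i k)) _ (hkx (cc i k))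
      rwa [hckx (cc i k)] at h3
    exact (Finset.disjoint_left.mp (hdisj _ (hix _) i hi hne) h2) h1
  have huniq2 : ∀ i ∈ R, ∀ k, k < mm i → kx (cc i k) = k := by
    intro i hi k hk
    have h1 := huniq1 i hi k hk
    have h2 : cc i (kx (cc i k)) = cc i k := by
      have h3 := hckx (cc i k)
      rwa [h1] at h3
    have h4 : kx (cc i k) < mm i := by
      have h5 := hkx (cc i k)
      rwa [h1] at h5
    exact hinj i hi _ k h4 hk h2
  set next : Fin n → Fin n := fun x => cc (ix x) (kx x + 1) with hnext
  have hmodmem : ∀ i ∈ R, ∀ k, k < mm i → cc i (k + 1) = cc i ((k + 1) % mm i) := by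
    intro i hi k hk
    rcases Nat.lt_or_ge (k + 1) (mm i) with h1 | h1
    · rw [Nat.mod_eq_of_lt h1]
    · have hk1 : k + 1 = mm i := by omega
      rw [hk1, Nat.mod_self, (hcrit i hi).2.1]
  have hnextinj : Function.Injective next := by
    intro x y hxy
    have hxmem : next x ∈ N (ix x) := by
      rw [hnext]
      simp only
      rw [hmodmem _ (hix x) _ (hkx x)]
      exact hmemN _ (hix x) _ (Nat.mod_lt _ (by have := hm1 _ (hix x); omega))
    have hymem : next y ∈ N (ix y) := by
      rw [hnext]
      simp only
      rw [hmodmem _ (hix y) _ (hkx y)]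
      exact hmemN _ (hix y) _ (Nat.mod_lt _ (by have := hm1 _ (hix y); omega))
    have hixeq : ix x = ix y := by
      by_contra hne
      have := Finset.disjoint_left.mp (hdisj _ (hix x) _ (hix y) hne) hxmem
      rw [hxy] at this
      exact this hymem
    -- now same circuit
    have hcc : cc (ix x) ((kx x + 1) % mm (ix x)) = cc (ix x) ((kx y + 1) % mm (ix x)) := by
      have h1 : cc (ix x) (kx x + 1) = cc (ix y) (kx y + 1) := hxy
      rw [hixeq] at h1 ⊢
      rw [← hmodmem _ (hix y) _ (hkx y), ← h1, hmodmem _ (hix y) _ ?_]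
      · rw [← hixeq]
        exact hkx x
    have hmodeq : (kx x + 1) % mm (ix x) = (kx y + 1) % mm (ix x) :=
      hinj _ (hix x) _ _ (Nat.mod_lt _ (by have := hm1 _ (hix x); omega))
        (Nat.mod_lt _ (by have := hm1 _ (hix x); omega)) hcc
    have hkxy : kx x = kx y := by
      have hax : kx x < mm (ix x) := hkx x
      have hay : kx y < mm (ix x) := by rw [hixeq]; exact hkx y
      rcases Nat.lt_or_ge (kx x + 1) (mm (ix x)) with h1 | h1 <;>
        rcases Nat.lt_or_ge (kx y + 1) (mm (ix x)) with h2 | h2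
      · rwa [Nat.mod_eq_of_lt h1, Nat.mod_eq_of_lt h2, Nat.add_right_cancel_iff] at hmodeq
      · rw [Nat.mod_eq_of_lt h1, show kx y + 1 = mm (ix x) by omega, Nat.mod_self] at hmodeq
        omega
      · rw [Nat.mod_eq_of_lt h2, show kx x + 1 = mm (ix x) by omega, Nat.mod_self] at hmodeq
        omega
      · omega
    calc x = cc (ix x) (kx x) := (hckx x).symm
      _ = cc (ix y) (kx y) := by rw [hixeq, hkxy]
      _ = y := hckx y
  set σ : Equiv.Perm (Fin n) := Equiv.ofBijective next (Finite.injective_iff_bijective.mp hnextinj)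
    with hσdef
  have hσ : ∀ i ∈ R, ∀ k, k < mm i → σ (cc i k) = cc i (k + 1) := by
    intro i hi k hk
    show next (cc i k) = cc i (k + 1)
    rw [hnext]
    simp only
    rw [huniq1 i hi k hk, huniq2 i hi k hk]
  -- weight of σ
  have hwtσ : wt P σ = (((n : ℝ) * r' : ℝ) : T) := by
    unfold wt
    rw [show (Finset.univ : Finset (Fin n)) = R.biUnion N from hcover.symm]
    rw [Finset.sum_biUnion (fun i hi j hj hij => hdisj i (by simpa using hi) j (by simpa using hj) hij)]
    have hinner : ∀ i ∈ R, ∑ x ∈ N i, P x (σ x) = (((mm i : ℝ) * r' : ℝ) : T) := by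
      intro i hi
      rw [hN]
      simp only
      rw [Finset.sum_image (fun a ha b hb hab =>
        hinj i hi a b (Finset.mem_range.mp ha) (Finset.mem_range.mp hb) hab)]
      have : ∀ k ∈ Finset.range (mm i), P (cc i k) (σ (cc i k)) = P (cc i k) (cc i (k + 1)) := by
        intro k hk
        rw [hσ i hi k (Finset.mem_range.mp hk)]
      rw [Finset.sum_congr rfl this]
      exact (hcrit i hi).2.2
    rw [Finset.sum_congr rfl hinner, Stmt16Aux.coe_sum]
    congr 1
    rw [← Finset.sum_mul]
    congr 1
    exact_mod_cast hEq2
  -- the structural claim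
  have hstruct : ∀ u w : Fin n, CritArc P r' u w → w = σ u := by
    intro u w harc
    obtain ⟨mD, ED, hEDcrit, hEDper, hED0, hED1⟩ := walk_of_critArc harc
    have hiR : ix u ∈ R := hix u
    have ha : kx u < mm (ix u) := hkx u
    have hau : cc (ix u) (kx u) = u := hckx u
    set i : Fin n := ix u with hidef
    set a : ℕ := kx u with hadef
    set s : ℕ := mm i with hsdef
    have hs1 : 1 ≤ s := hm1 i hiR
    have hmD1 : 1 ≤ mD := hEDcrit.1
    have hsccuw : SameScc P r' u w := by
      have h := sameScc_of_walk hEDcrit hmD1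
      rwa [hED0, hED1] at h
    have hiw : ix w = i := by
      by_contra hne
      have h1 : SameScc P r' i u := by
        have := hsccN i hiR u (by rw [← hau]; exact hmemN i hiR a ha)
        exact this
      have h2 : SameScc P r' (ix w) w := hsccN _ (hix w) w (by
        have h3 := hmemN _ (hix w) _ (hkx w)
        rwa [hckx w] at h3)
      have h3 : SameScc P r' i (ix w) :=
        sameScc_trans (sameScc_trans h1 hsccuw) (sameScc_symm h2)
      exact hRR.2.1 i hiR (ix w) (hix w) (fun h => hne h.symm) h3
    have hb : kx w < s := by have := hkx w; rwa [hiw] at this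
    have hbw : cc i (kx w) = w := by have := hckx w; rwa [hiw] at this
    set b : ℕ := kx w with hbdef
    set cpi : ℕ → Fin n := pzd s (cc i) with hcpidef
    have hcpiper : ∀ j, cpi (j + s) = cpi j := pzd_periodic (cc i)
    have hcpi : ∀ j, j < s → cpi j = cc i j := fun j hj => pzd_eq (cc i) hj
    have hcpis : wwt P s cpi = (((s : ℝ) * r' : ℝ) : T) := by
      rw [hcpidef, wwt_pzd P (hcrit i hiR).2.1]
      exact (hcrit i hiR).2.2
    set d : ℕ := (a + s - b) % s with hddef
    have hds : d < s := Nat.mod_lt _ (by omega)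
    have hbd : (b + d) % s = a := by
      rw [hddef, Nat.add_mod_mod, show b + (a + s - b) = a + s by omega,
        Nat.add_mod_right, Nat.mod_eq_of_lt ha]
    have hcpiu : cpi (b + d) = u := by
      show cc i ((b + d) % s) = u
      rw [hbd, hau]
    set Z : ℕ → Fin n := wcat d (shf b cpi) (fun k => if k = 0 then u else w) with hZdef
    have hZbd : (shf b cpi) d = (fun k : ℕ => if k = 0 then u else w) 0 := by
      show cpi (b + d) = if (0 : ℕ) = 0 then u else w
      rw [hcpiu]
      simp
    have hZ0 : Z 0 = w := by
      rw [hZdef, wcat_zero hZbd]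
      show cpi (b + 0) = w
      rw [Nat.add_zero, hcpi b hb, hbw]
    have hZend : Z (d + 1) = w := by
      rw [hZdef, wcat_end 1]
      simp
    have harc1 : wwt P 1 (fun k : ℕ => if k = 0 then u else w) = P u w := by
      unfold wwt
      rw [Finset.sum_range_one]
      simp
    have hZsplit : wwt P (d + 1) Z =
        wwt P d (shf b cpi) + wwt P 1 (fun k : ℕ => if k = 0 then u else w) :=
      wcat_wwt hZbd
    set Z' : ℕ → Fin n := wcat (s - d) (shf (b + d) cpi) (shf 1 ED) with hZ'def
    have hZ'bd : (shf (b + d) cpi) (s - d) = (shf 1 ED) 0 := by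
      show cpi (b + d + (s - d)) = ED (1 + 0)
      rw [show b + d + (s - d) = b + s by omega, hcpiper, hcpi b hb, hbw]
      rw [show (1 : ℕ) + 0 = 1 from rfl, hED1]
    have hZ'0 : Z' 0 = u := by
      rw [hZ'def, wcat_zero hZ'bd]
      show cpi (b + d + 0) = u
      rw [Nat.add_zero]
      exact hcpiu
    have hZ'end : Z' ((s - d) + (mD - 1)) = u := by
      rw [hZ'def, wcat_end (mD - 1)]
      show ED (1 + (mD - 1)) = u
      rw [show 1 + (mD - 1) = mD by omega, hEDcrit.2.1, hED0]
    have hZ'split : wwt P ((s - d) + (mD - 1)) Z' =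
        wwt P (s - d) (shf (b + d) cpi) + wwt P (mD - 1) (shf 1 ED) :=
      wcat_wwt hZ'bd
    have hsplitC : wwt P d (shf b cpi) + wwt P (s - d) (shf (b + d) cpi) = wwt P s cpi := by
      have h1 : wwt P s (shf b cpi) =
          wwt P d (shf b cpi) + wwt P (s - d) (shf (b + d) cpi) := by
        unfold wwt shf
        have h2 := sum_range_split (fun k => P (cpi (b + k)) (cpi (b + (k + 1)))) d (s - d)
        rw [show d + (s - d) = s by omega] at h2
        rw [h2]
        congr 1
        apply Finset.sum_congr rfl
        intro k _
        show P (cpi (b + (d + k))) (cpi (b + (d + k + 1))) = P (cpi (b + d + k)) (cpi (b + d + (k + 1)))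
        rw [show b + (d + k) = b + d + k by omega, show b + (d + k + 1) = b + d + (k + 1) by omega]
      rw [← h1, wwt_shf P cpi hcpiper b]
    have hEDsplit : P u w + wwt P (mD - 1) (shf 1 ED) = wwt P mD ED := by
      unfold wwt shf
      conv_rhs => rw [show mD = (mD - 1) + 1 by omega]
      rw [Finset.sum_range_succ' (fun k => P (ED k) (ED (k + 1))) (mD - 1)]
      have hf0 : P (ED 0) (ED (0 + 1)) = P u w := by
        show P (ED 0) (ED 1) = P u w
        rw [hED0, hED1]
      rw [hf0, add_comm]
      congr 1
      apply Finset.sum_congr rfl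
      intro k _
      show P (ED (1 + k)) (ED (1 + k + 1)) = P (ED (k + 1)) (ED (k + 1 + 1))
      rw [show 1 + k = k + 1 by omega]
    have hZclosed : Z (d + 1) = Z 0 := by rw [hZend, hZ0]
    have hZ'closed : Z' ((s - d) + (mD - 1)) = Z' 0 := by rw [hZ'end, hZ'0]
    have hZle := wwt_le_of_rho hrp (show 1 ≤ d + 1 by omega) hZclosed
    have hZ'le := wwt_le_of_rho hrp (show 1 ≤ (s - d) + (mD - 1) by omega) hZ'closed
    have hsum : wwt P (d + 1) Z + wwt P ((s - d) + (mD - 1)) Z' =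
        ((((d + 1 : ℕ) : ℝ) * r' + (((s - d) + (mD - 1) : ℕ) : ℝ) * r' : ℝ) : T) := by
      rw [hZsplit, harc1, hZ'split]
      calc (wwt P d (shf b cpi) + P u w) +
            (wwt P (s - d) (shf (b + d) cpi) + wwt P (mD - 1) (shf 1 ED))
          = (wwt P d (shf b cpi) + wwt P (s - d) (shf (b + d) cpi)) +
            (P u w + wwt P (mD - 1) (shf 1 ED)) := by
            rw [add_add_add_comm]
        _ = wwt P s cpi + wwt P mD ED := by rw [hsplitC, hEDsplit]
        _ = (((s : ℝ) * r' : ℝ) : T) + (((mD : ℝ) * r' : ℝ) : T) := by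
            rw [hcpis, hEDcrit.2.2]
        _ = ((((d + 1 : ℕ) : ℝ) * r' + (((s - d) + (mD - 1) : ℕ) : ℝ) * r' : ℝ) : T) := by
            rw [← WithBot.coe_add]
            congr 1
            have hc : ((d + 1 : ℕ) : ℝ) + (((s - d) + (mD - 1) : ℕ) : ℝ) = (s : ℝ) + (mD : ℝ) := by
              exact_mod_cast congrArg (Nat.cast : ℕ → ℝ)
                (by omega : (d + 1) + ((s - d) + (mD - 1)) = s + mD)
            nlinarith [hc]
    obtain ⟨hZcritw, -⟩ := squeeze_two hZle hZ'le hsum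
    have hZcrit : IsCritW P r' (d + 1) Z := ⟨by omega, hZclosed, hZcritw⟩
    -- the big closed walk based at i
    have hBbd2 : Z (d + 1) = (shf b cpi) 0 := by
      show Z (d + 1) = cpi (b + 0)
      rw [hZend, Nat.add_zero, hcpi b hb, hbw]
    have hBbd1 : cpi b = (wcat (d + 1) Z (shf b cpi)) 0 := by
      rw [wcat_zero hBbd2, hZ0, hcpi b hb, hbw]
    set B : ℕ → Fin n := wcat b cpi (wcat (d + 1) Z (shf b cpi)) with hBdef
    have hB0 : B 0 = i := by
      rw [hBdef, wcat_zero hBbd1, hcpi 0 (by omega), h0 i hiR]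
    have hsplitC2 : wwt P b cpi + wwt P (s - b) (shf b cpi) = wwt P s cpi := by
      unfold wwt shf
      have h2 := sum_range_split (fun k => P (cpi k) (cpi (k + 1))) b (s - b)
      rw [show b + (s - b) = s by omega] at h2
      rw [h2]
      rfl
    have hBlen : b + ((d + 1) + (s - b)) = s + d + 1 := by omega
    have hBclosed : B (b + ((d + 1) + (s - b))) = B 0 := by
      rw [hB0, hBdef, wcat_end ((d + 1) + (s - b)), wcat_end (s - b)]
      show cpi (b + (s - b)) = i
      rw [show b + (s - b) = s by omega, show s = 0 + s by omega, hcpiper,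
        hcpi 0 (by omega), h0 i hiR]
    have hBwwt : wwt P (b + ((d + 1) + (s - b))) B =
        ((((b + ((d + 1) + (s - b)) : ℕ) : ℝ) * r' : ℝ) : T) := by
      rw [hBdef, wcat_wwt hBbd1, wcat_wwt hBbd2]
      calc wwt P b cpi + (wwt P (d + 1) Z + wwt P (s - b) (shf b cpi))
          = (wwt P b cpi + wwt P (s - b) (shf b cpi)) + wwt P (d + 1) Z := by
            rw [add_comm (wwt P (d + 1) Z), ← add_assoc]
        _ = wwt P s cpi + wwt P (d + 1) Z := by rw [hsplitC2]
        _ = (((s : ℝ) * r' : ℝ) : T) + ((((d + 1 : ℕ) : ℝ) * r' : ℝ) : T) := by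
            rw [hcpis, hZcritw]
        _ = ((((b + ((d + 1) + (s - b)) : ℕ) : ℝ) * r' : ℝ) : T) := by
            rw [← WithBot.coe_add]
            congr 1
            have hc : (s : ℝ) + ((d + 1 : ℕ) : ℝ) = ((b + ((d + 1) + (s - b)) : ℕ) : ℝ) := by
              exact_mod_cast congrArg (Nat.cast : ℕ → ℝ)
                (by omega : s + (d + 1) = b + ((d + 1) + (s - b)))
            nlinarith [hc]
    have hBcrit : IsCritW P r' (b + ((d + 1) + (s - b))) B := ⟨by omega, hBclosed, hBwwt⟩
    have hdvdB := (hdvd i hiR).1 _ B hBcrit hB0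
    have hcyc : cycAt P r' i = s := hptwise i hiR
    rw [hcyc, hBlen] at hdvdB
    have hsd1 : s ∣ d + 1 := by
      have h := hdvdB
      rw [show s + d + 1 = s + (d + 1) by omega] at h
      exact (Nat.dvd_add_right (dvd_refl s)).mp h
    have hd1 : d + 1 = s := le_antisymm (by omega) (Nat.le_of_dvd (by omega) hsd1)
    have hb' : (a + 1) % s = b := by
      have h1 : (b + (s - 1)) % s = a := by
        rw [show s - 1 = d by omega]
        exact hbd
      calc (a + 1) % s = ((b + (s - 1)) % s + 1) % s := by rw [h1]
        _ = (b + (s - 1) + 1) % s := by rw [Nat.mod_add_mod]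
        _ = (b + s) % s := by
            congr 1
            omega
        _ = b := by rw [Nat.add_mod_right, Nat.mod_eq_of_lt hb]
    have hσu : σ u = cc i ((a + 1) % s) := by
      rw [← hau, hσ i hiR a ha, hmodmem i hiR a ha]
    rw [hσu, hb', hbw]
  -- conclusion via the exchange lemma
  have hfactors : ∀ M ∈ List.ofFn A, ∀ τ : Equiv.Perm (Fin n), wt M τ ≤ 0 := by
    intro M hM τ
    obtain ⟨t, rfl⟩ := List.mem_ofFn.mp hM
    have := wt_le_of_rho (hrho t) τ
    have h0' : (((n : ℝ) * 0 : ℝ) : T) = 0 := by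
      norm_num
    rwa [h0'] at this
  have hposσ : (0 : T) < wt P σ := by
    rw [hwtσ, ← WithBot.coe_zero, WithBot.coe_lt_coe]
    positivity
  obtain ⟨σ', hσ'ne, hσ'ge⟩ := key hn (List.ofFn A) hfactors σ (by rwa [← hP])
  rw [← hP] at hσ'ge
  have hσ'eq : wt P σ' = (((n : ℝ) * r' : ℝ) : T) :=
    le_antisymm (wt_le_of_rho hrp σ') (hwtσ ▸ hσ'ge)
  exact hσ'ne (Equiv.ext fun x => hstruct x (σ' x) (arcs_crit_of_wt_eq hrp σ' hσ'eq x))
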